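/- Let s ∈ (0,1), set β = s²/(2√(1 − s²)) and k² = (1 − s²)/(2 − s²) with k > 0. Then ∫₀^{arcsin s} 2/√(4β² − sin²θ tan²θ) dθ = (2k/s)·K(k²), where K(m) = ∫₀^{π/2} (1 − m sin²t)^{−1/2} dt is the complete elliptic integral of the first kind. -/

import Mathlib

open Real intervalIntegral

/-- The complete elliptic integral of the first kind,
`K(m) = ∫₀^{π/2} (1 − m sin²t)^{−1/2} dt`. -/
noncomputable def ellK (m : ℝ) : ℝ :=
  ∫ t in (0:ℝ)..(Real.pi / 2), (Real.sqrt (1 - m * Real.sin t ^ 2))⁻¹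

set_option maxHeartbeats 1000000 in
theorem rotor_on_time_elliptic
    (s β k : ℝ) (hs : s ∈ Set.Ioo (0:ℝ) 1)
    (hβ : β = s ^ 2 / (2 * Real.sqrt (1 - s ^ 2)))
    (hk : 0 < k) (hk2 : k ^ 2 = (1 - s ^ 2) / (2 - s ^ 2)) :
    (∫ θ in (0:ℝ)..(Real.arcsin s),
        2 / Real.sqrt (4 * β ^ 2 - Real.sin θ ^ 2 * Real.tan θ ^ 2))
      = (2 * k / s) * ellK (k ^ 2) := by
  obtain ⟨hs0, hs1⟩ := hs
  have hπ : (0:ℝ) < π / 2 := by positivity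
  have hc0 : (0:ℝ) < 1 - s ^ 2 := by nlinarith
  have h1c : (0:ℝ) < 2 - s ^ 2 := by nlinarith
  have hsqc : (0:ℝ) < Real.sqrt (1 - s ^ 2) := Real.sqrt_pos.2 hc0
  have hsq1c : (0:ℝ) < Real.sqrt (2 - s ^ 2) := Real.sqrt_pos.2 h1c
  have hkval : k = Real.sqrt (1 - s ^ 2) / Real.sqrt (2 - s ^ 2) := by
    have h1 : k = Real.sqrt (k ^ 2) := (Real.sqrt_sq hk.le).symm
    rw [h1, hk2, Real.sqrt_div hc0.le]
  have hβ2 : 4 * β ^ 2 = s ^ 4 / (1 - s ^ 2) := by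
    rw [hβ, div_pow, mul_pow]
    rw [Real.sq_sqrt hc0.le]
    field_simp
    ring
  have h0arc : 0 < Real.arcsin s := Real.arcsin_pos.2 hs0
  have harcle : Real.arcsin s ≤ π / 2 := Real.arcsin_le_pi_div_two s
  set f : ℝ → ℝ := fun x => Real.arcsin (s * Real.cos x) with hf_def
  set F' : ℝ → ℝ :=
    fun x => 1 / Real.sqrt (1 - (s * Real.cos x) ^ 2) * (s * -Real.sin x) with hF'_def
  have hmem : ∀ x ∈ Set.Ioo (0:ℝ) (π/2),
      0 < s * Real.cos x ∧ s * Real.cos x < 1 := by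
    intro x hx
    have hcx0 : 0 < Real.cos x :=
      Real.cos_pos_of_mem_Ioo ⟨by linarith [hx.1], hx.2⟩
    have hcx1 : Real.cos x ≤ 1 := Real.cos_le_one x
    constructor
    · positivity
    · nlinarith
  -- derivative
  have hderiv : ∀ x ∈ Set.Ioo (0:ℝ) (π/2),
      HasDerivWithinAt f (F' x) (Set.Ioo 0 (π/2)) x := by
    intro x hx
    obtain ⟨h1, h2⟩ := hmem x hx
    have hg : HasDerivAt (fun x => s * Real.cos x) (s * -Real.sin x) x :=
      (Real.hasDerivAt_cos x).const_mul s
    have ha : HasDerivAt Real.arcsin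
        (1 / Real.sqrt (1 - (s * Real.cos x) ^ 2)) (s * Real.cos x) :=
      Real.hasDerivAt_arcsin
        (show ((-1:ℝ) < s * Real.cos x) by linarith).ne' (ne_of_lt h2)
    exact (ha.comp x hg).hasDerivWithinAt
  -- injectivity
  have hinj : Set.InjOn f (Set.Ioo 0 (π/2)) := by
    intro x hx y hy hxy
    obtain ⟨hx1, hx2⟩ := hmem x hx
    obtain ⟨hy1, hy2⟩ := hmem y hy
    have h1 : s * Real.cos x = s * Real.cos y :=
      Real.injOn_arcsin ⟨by linarith, hx2.le⟩ ⟨by linarith, hy2.le⟩ hxy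
    have h2 : Real.cos x = Real.cos y := mul_left_cancel₀ hs0.ne' h1
    exact Real.injOn_cos ⟨hx.1.le, by linarith [hx.2, Real.pi_pos]⟩
      ⟨hy.1.le, by linarith [hy.2, Real.pi_pos]⟩ h2
  -- image
  have himg : f '' Set.Ioo 0 (π/2) = Set.Ioo 0 (Real.arcsin s) := by
    ext θ
    constructor
    · rintro ⟨x, hx, rfl⟩
      obtain ⟨h1, h2⟩ := hmem x hx
      have hcx1 : Real.cos x < 1 := by
        have := Real.strictAntiOn_cos ⟨le_refl (0:ℝ), Real.pi_pos.le⟩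
          ⟨hx.1.le, by linarith [hx.2, Real.pi_pos]⟩ hx.1
        simpa using this
      refine ⟨Real.arcsin_pos.2 h1, ?_⟩
      exact Real.strictMonoOn_arcsin ⟨by linarith, h2.le⟩
        ⟨by linarith, hs1.le⟩ (by nlinarith)
    · rintro ⟨hθ0, hθs⟩
      have hθπ : θ < π / 2 := lt_of_lt_of_le hθs harcle
      have hsinθ : 0 < Real.sin θ :=
        Real.sin_pos_of_pos_of_lt_pi hθ0 (by linarith [Real.pi_pos])
      have hlt : Real.sin θ < s := by
        have h := Real.strictMonoOn_sin ⟨by linarith, hθπ.le⟩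
          ⟨by linarith, harcle⟩ hθs
        rwa [Real.sin_arcsin (by linarith) hs1.le] at h
      have hr0 : 0 < Real.sin θ / s := div_pos hsinθ hs0
      have hr1 : Real.sin θ / s < 1 := (div_lt_one hs0).2 hlt
      refine ⟨Real.arccos (Real.sin θ / s),
        ⟨Real.arccos_pos.2 hr1, Real.arccos_lt_pi_div_two.2 hr0⟩, ?_⟩
      show Real.arcsin (s * Real.cos (Real.arccos (Real.sin θ / s))) = θ
      rw [Real.cos_arccos (by linarith) hr1.le, mul_div_cancel₀ _ hs0.ne',
        Real.arcsin_sin (by linarith) hθπ.le]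
  -- the key pointwise identity
  have key : ∀ x ∈ Set.Ioo (0:ℝ) (π/2),
      |F' x| * (2 / Real.sqrt (4 * β ^ 2 - Real.sin (f x) ^ 2 * Real.tan (f x) ^ 2))
        = 2 * k / s * (Real.sqrt (1 - k ^ 2 * Real.sin x ^ 2))⁻¹ := by
    intro x hx
    obtain ⟨hu0, hu1⟩ := hmem x hx
    have hsx : 0 < Real.sin x :=
      Real.sin_pos_of_pos_of_lt_pi hx.1 (by linarith [hx.2, Real.pi_pos])
    have hN : 0 < 1 - (s * Real.cos x) ^ 2 := by nlinarith
    have hsqN : 0 < Real.sqrt (1 - (s * Real.cos x) ^ 2) := Real.sqrt_pos.2 hN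
    have hT : 0 < 1 + (1 - s ^ 2) * Real.cos x ^ 2 := by nlinarith
    have hsqT : 0 < Real.sqrt (1 + (1 - s ^ 2) * Real.cos x ^ 2) := Real.sqrt_pos.2 hT
    have hsqN' : Real.sqrt (1 - (s * Real.cos x) ^ 2) ≠ 0 := hsqN.ne'
    have hsqT' : Real.sqrt (1 + (1 - s ^ 2) * Real.cos x ^ 2) ≠ 0 := hsqT.ne'
    have hsqc' : Real.sqrt (1 - s ^ 2) ≠ 0 := hsqc.ne'
    have hsq1c' : Real.sqrt (2 - s ^ 2) ≠ 0 := hsq1c.ne'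
    have hs0' : s ≠ 0 := hs0.ne'
    have hsx' : Real.sin x ≠ 0 := hsx.ne'
    have hN2 : (1 - s ^ 2 * Real.cos x ^ 2) ≠ 0 := by rw [← mul_pow]; exact hN.ne'
    have hsqN2 : Real.sqrt (1 - s ^ 2 * Real.cos x ^ 2) ≠ 0 := by rw [← mul_pow]; exact hsqN'
    have hsq : Real.sin x ^ 2 = 1 - Real.cos x ^ 2 := Real.sin_sq x
    have hsinf : Real.sin (f x) = s * Real.cos x :=
      Real.sin_arcsin (by linarith) hu1.le
    have htanf : Real.tan (f x) =
        s * Real.cos x / Real.sqrt (1 - (s * Real.cos x) ^ 2) :=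
      Real.tan_arcsin _
    -- the argument of the big square root
    have hE : 4 * β ^ 2 - Real.sin (f x) ^ 2 * Real.tan (f x) ^ 2
        = (s ^ 2 * Real.sin x) ^ 2 * (1 + (1 - s ^ 2) * Real.cos x ^ 2)
          / ((1 - s ^ 2) * (1 - (s * Real.cos x) ^ 2)) := by
      rw [hsinf, htanf, hβ2, div_pow, Real.sq_sqrt hN.le]
      field_simp
      linear_combination (-(1 + (1 - s ^ 2) * Real.cos x ^ 2)) * hsq
    have hsqE : Real.sqrt (4 * β ^ 2 - Real.sin (f x) ^ 2 * Real.tan (f x) ^ 2)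
        = s ^ 2 * Real.sin x * Real.sqrt (1 + (1 - s ^ 2) * Real.cos x ^ 2)
          / (Real.sqrt (1 - s ^ 2) * Real.sqrt (1 - (s * Real.cos x) ^ 2)) := by
      rw [hE, Real.sqrt_div (by positivity), Real.sqrt_mul (by positivity),
        Real.sqrt_sq (by positivity), Real.sqrt_mul hc0.le]
    have habs : |F' x| = s * Real.sin x / Real.sqrt (1 - (s * Real.cos x) ^ 2) := by
      have h1 : F' x = -(s * Real.sin x / Real.sqrt (1 - (s * Real.cos x) ^ 2)) := by
        simp only [hF'_def]
        field_simp
      rw [h1, abs_neg, abs_of_pos (by positivity)]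
    -- the right-hand side
    have h1k : 1 - k ^ 2 * Real.sin x ^ 2
        = (1 + (1 - s ^ 2) * Real.cos x ^ 2) / (2 - s ^ 2) := by
      rw [hk2]
      field_simp
      linear_combination (s ^ 2 - 1) * hsq
    rw [habs, hsqE, h1k, Real.sqrt_div hT.le, hkval]
    field_simp
  -- assemble everything
  have step1 : (∫ θ in (0:ℝ)..(Real.arcsin s),
      2 / Real.sqrt (4 * β ^ 2 - Real.sin θ ^ 2 * Real.tan θ ^ 2))
      = ∫ θ in Set.Ioo 0 (Real.arcsin s),
          2 / Real.sqrt (4 * β ^ 2 - Real.sin θ ^ 2 * Real.tan θ ^ 2) := by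
    rw [intervalIntegral.integral_of_le h0arc.le,
      MeasureTheory.integral_Ioc_eq_integral_Ioo]
  rw [step1, ← himg,
    MeasureTheory.integral_image_eq_integral_abs_deriv_smul measurableSet_Ioo hderiv hinj]
  have step2 : (∫ x in Set.Ioo (0:ℝ) (π/2),
        |F' x| • (2 / Real.sqrt (4 * β ^ 2 - Real.sin (f x) ^ 2 * Real.tan (f x) ^ 2)))
      = ∫ x in Set.Ioo (0:ℝ) (π/2),
          2 * k / s * (Real.sqrt (1 - k ^ 2 * Real.sin x ^ 2))⁻¹ :=
    MeasureTheory.setIntegral_congr_fun measurableSet_Ioo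
      (fun x hx => by rw [smul_eq_mul]; exact key x hx)
  rw [step2, MeasureTheory.integral_const_mul]
  congr 1
  unfold ellK
  rw [intervalIntegral.integral_of_le hπ.le,
    MeasureTheory.integral_Ioc_eq_integral_Ioo]
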